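/- Let Q(λ,u) = 4(λ+2)²(λu+u−1)²(1+u)²(1+λ)²(λu+1+u)²λ². Let (λ_s)_{s∈S} be a family of elements of k with λ_s = λ_t whenever s and t are conjugate in W. If Q(λ_s, u_s) is invertible in k for every s ∈ S, then C_W(u) is generated as a unital k-algebra by the elements g_s + λ_s g_s e_s, s ∈ S (the images of the Artin generators under the morphism s ↦ g_s + λ_s g_s e_s). -/

import Mathlib

open scoped Classical

noncomputable section

namespace CWpaper

variable {B : Type} {M : CoxeterMatrix B} {W : Type} [Group W] (cs : CoxeterSystem M W)
variable (k : Type) [CommRing k]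

/-- The set of reflections of the Coxeter system, as a subtype. -/
abbrev Refl := {t : W // cs.IsReflection t}

/-- Index type for the generators of `C_W(u)`: `inl i` indexes `g` generators,
`inr t` indexes `e` generators. -/
abbrev Gen := B ⊕ Refl cs

/-- The free-algebra generator corresponding to `g_s`. -/
def gf (i : B) : FreeAlgebra k (Gen cs) := FreeAlgebra.ι k (Sum.inl i)

/-- The free-algebra generator corresponding to `e_t`. -/
def ef (t : Refl cs) : FreeAlgebra k (Gen cs) := FreeAlgebra.ι k (Sum.inr t)

/-- A simple reflection, as a reflection. -/
def simpleR (i : B) : Refl cs := ⟨cs.simple i, cs.isReflection_simple i⟩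

/-- Conjugate of a reflection by a group element. -/
def conjR (w : W) (t : Refl cs) : Refl cs := ⟨w * t.1 * w⁻¹, t.2.conj w⟩

/-- The defining relations of the algebra `C_W(u)`. -/
inductive CWrel (u : B → k) : FreeAlgebra k (Gen cs) → FreeAlgebra k (Gen cs) → Prop
  | braid (i j : B) (h : M i j ≠ 0) :
      CWrel u (((CoxeterSystem.alternatingWord i j (M i j)).map (gf cs k)).prod)
              (((CoxeterSystem.alternatingWord j i (M i j)).map (gf cs k)).prod)
  | idem (t : Refl cs) : CWrel u (ef cs k t * ef cs k t) (ef cs k t)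
  | comm (t₁ t₂ : Refl cs) : CWrel u (ef cs k t₁ * ef cs k t₂) (ef cs k t₂ * ef cs k t₁)
  | conj (t t₁ : Refl cs) :
      CWrel u (ef cs k t * ef cs k t₁) (ef cs k t * ef cs k (conjR cs t.1 t₁))
  | move (i : B) (t : Refl cs) :
      CWrel u (gf cs k i * ef cs k t) (ef cs k (conjR cs (cs.simple i) t) * gf cs k i)
  | quad (i : B) :
      CWrel u (gf cs k i * gf cs k i)
        (1 + algebraMap k _ (u i - 1) * ef cs k (simpleR cs i) * (1 + gf cs k i))

variable (u : B → k)

/-- The algebra `C_W(u)`. -/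
abbrev CW := RingQuot (CWrel cs k u)

/-- The generator `g_s` of `C_W(u)`. -/
def gCW (i : B) : CW cs k u := RingQuot.mkAlgHom k (CWrel cs k u) (gf cs k i)

/-- The generator `e_t` of `C_W(u)`. -/
def eCW (t : Refl cs) : CW cs k u := RingQuot.mkAlgHom k (CWrel cs k u) (ef cs k t)

theorem eCW_commute (t₁ t₂ : Refl cs) : Commute (eCW cs k u t₁) (eCW cs k u t₂) := by
  have h := RingQuot.mkAlgHom_rel k (CWrel.comm (cs := cs) (k := k) (u := u) t₁ t₂)
  have h' : eCW cs k u t₁ * eCW cs k u t₂ = eCW cs k u t₂ * eCW cs k u t₁ := by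
    simpa only [map_mul, eCW] using h
  exact h'

/-- The product `e_J = ∏_{t ∈ J} e_t` for a finite set of reflections `J`. -/
def eJ (J : Finset (Refl cs)) : CW cs k u :=
  J.noncommProd (eCW cs k u) (fun t₁ _ t₂ _ _ => eCW_commute cs k u t₁ t₂)

/-- `gg : W → C_W(u)` is the family `(g_w)_{w ∈ W}` iff for every reduced word
`l` for `w`, `gg w` is the product of the `g_s`, `s ∈ l`. -/
def IsGFamily (gg : W → CW cs k u) : Prop :=
  ∀ l : List B, cs.IsReduced l → gg (cs.wordProd l) = (l.map (gCW cs k u)).prod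

end CWpaper

namespace CWpaper

section Aux

variable {B : Type} {M : CoxeterMatrix B} {W : Type} [Group W] (cs : CoxeterSystem M W)
variable (k : Type) [CommRing k] (u : B → k)


theorem eCW_idem (t : Refl cs) : eCW cs k u t * eCW cs k u t = eCW cs k u t := by
  have h := RingQuot.mkAlgHom_rel k (CWrel.idem (cs := cs) (k := k) (u := u) t)
  simpa only [map_mul, eCW] using h

theorem eCW_conj (t t₁ : Refl cs) :
    eCW cs k u t * eCW cs k u t₁ = eCW cs k u t * eCW cs k u (conjR cs t.1 t₁) := by
  have h := RingQuot.mkAlgHom_rel k (CWrel.conj (cs := cs) (k := k) (u := u) t t₁)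
  simpa only [map_mul, eCW] using h

theorem gCW_move (i : B) (t : Refl cs) :
    gCW cs k u i * eCW cs k u t = eCW cs k u (conjR cs (cs.simple i) t) * gCW cs k u i := by
  have h := RingQuot.mkAlgHom_rel k (CWrel.move (cs := cs) (k := k) (u := u) i t)
  simpa only [map_mul, gCW, eCW] using h

theorem gCW_sq (i : B) :
    gCW cs k u i * gCW cs k u i
      = 1 + (u i - 1) • eCW cs k u (simpleR cs i)
          + (u i - 1) • (eCW cs k u (simpleR cs i) * gCW cs k u i) := by
  have h := RingQuot.mkAlgHom_rel k (CWrel.quad (cs := cs) (k := k) (u := u) i)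
  simp only [map_mul, map_add, map_one, AlgHom.commutes] at h
  simp only [gCW, eCW, h, ← Algebra.smul_def, mul_add, mul_one, smul_mul_assoc, add_assoc]

theorem conjR_simple_self (i : B) :
    conjR cs (cs.simple i) (simpleR cs i) = simpleR cs i := by
  apply Subtype.ext
  show cs.simple i * cs.simple i * (cs.simple i)⁻¹ = cs.simple i
  rw [cs.inv_simple, cs.simple_mul_simple_self, one_mul]

theorem conjR_simple_conjR_simple (i : B) (t : Refl cs) :
    conjR cs (cs.simple i) (conjR cs (cs.simple i) t) = t := by
  apply Subtype.ext
  show cs.simple i * (cs.simple i * t.1 * (cs.simple i)⁻¹) * (cs.simple i)⁻¹ = t.1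
  simp [cs.inv_simple, mul_assoc, cs.simple_mul_simple_self]

theorem gCW_eCW_simple_comm (i : B) :
    gCW cs k u i * eCW cs k u (simpleR cs i)
      = eCW cs k u (simpleR cs i) * gCW cs k u i := by
  rw [gCW_move, conjR_simple_self]

theorem eCW_conjR_step (i : B) (t : Refl cs) :
    eCW cs k u (conjR cs (cs.simple i) t)
      = gCW cs k u i * eCW cs k u t * gCW cs k u i
        - (u i - 1) • (eCW cs k u (simpleR cs i) * eCW cs k u t)
        - (u i - 1) • (eCW cs k u (simpleR cs i) * eCW cs k u t * gCW cs k u i) := by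
  set G := gCW cs k u i with hG
  set E := eCW cs k u t with hE
  set ET := eCW cs k u (conjR cs (cs.simple i) t) with hET
  set Es := eCW cs k u (simpleR cs i) with hEs
  have hce : Es * ET = Es * E := by
    have h := eCW_conj cs k u (simpleR cs i) (conjR cs (cs.simple i) t)
    rw [show conjR cs (simpleR cs i).1 (conjR cs (cs.simple i) t)
          = t from conjR_simple_conjR_simple cs i t] at h
    exact h
  have hcomm : ET * Es = Es * ET := (eCW_commute cs k u _ _)
  have expand : G * E * G = ET + (u i - 1) • (Es * E) + (u i - 1) • (Es * E * G) := by
    rw [hG, hE, gCW_move, ← hG, ← hET, mul_assoc, hG, gCW_sq, ← hG, ← hEs]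
    simp only [mul_add, mul_one, mul_smul_comm, ← mul_assoc]
    rw [hcomm, hce]
  rw [expand]; abel


end Aux

private lemma unit_smul_mem {k R : Type} [CommRing k] [Ring R] [Algebra k R]
    {A : Subalgebra k R} {d : k} (hd : IsUnit d) {x : R} (h : d • x ∈ A) : x ∈ A := by
  obtain ⟨dv, rfl⟩ := hd
  have hx : x = (↑dv⁻¹ : k) • ((dv : k) • x) := by
    rw [smul_smul, Units.inv_mul, one_smul]
  rw [hx]
  exact A.smul_mem h _

lemma aux_mem {k R : Type} [CommRing k] [Ring R] [Algebra k R] (A : Subalgebra k R)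
    (G E : R) (l v : k)
    (hEE : E * E = E) (hGE : G * E = E * G)
    (hGG : G * G = 1 + (v - 1) • E + (v - 1) • (E * G))
    (hdet : IsUnit ((1 + l) * (l * (l + 2)) * ((l * v + v - 1) * (l * v + v + 1))))
    (hX : G + l • (G * E) ∈ A) : E ∈ A ∧ G ∈ A := by
  rw [hGE] at hX
  set X : R := G + l • (E * G) with hXdef
  have h1 : G * (E * G) = E * (G * G) := by rw [← mul_assoc, hGE, mul_assoc]
  have h2 : (E * G) * G = E * (G * G) := mul_assoc E G G
  have h3 : (E * G) * (E * G) = E * (G * G) := by rw [mul_assoc, h1, ← mul_assoc, hEE]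
  have h4 : (E * G) * E = E * G := by rw [mul_assoc, hGE, ← mul_assoc, hEE]
  have hEGG : E * (G * G) = v • E + (v - 1) • (E * G) := by
    rw [hGG]
    simp only [mul_add, mul_one, mul_smul_comm, ← mul_assoc, hEE]
    module
  have hX2 : X * X = 1 + ((v - 1) + (2 * l + l ^ 2) * v) • E
      + ((v - 1) * (1 + 2 * l + l ^ 2)) • (E * G) := by
    rw [hXdef]
    simp only [add_mul, mul_add, smul_mul_assoc, mul_smul_comm, smul_smul]
    rw [h1, h2, h3, hEGG, hGG]
    module
  have hX3 : X * (X * X) = G + ((1 + l) * ((v - 1) * (1 + 2 * l + l ^ 2)) * v) • E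
      + ((1 + l) * (((v - 1) + (2 * l + l ^ 2) * v)
          + ((v - 1) * (1 + 2 * l + l ^ 2)) * (v - 1)) + l) • (E * G) := by
    rw [hX2]
    rw [hXdef]
    simp only [add_mul, mul_add, mul_one, smul_mul_assoc, mul_smul_comm, smul_smul]
    rw [hGE, h1, h4, h3, hEGG]
    module
  have hI : ((1 + l) * (l * (l + 2)) * ((l * v + v - 1) * (l * v + v + 1))) • E
      = ((1 + l) * (((v - 1) + (2 * l + l ^ 2) * v)
            + ((v - 1) * (1 + 2 * l + l ^ 2)) * (v - 1))) • (X * X - 1)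
        - ((v - 1) * (1 + 2 * l + l ^ 2)) • (X * (X * X) - X) := by
    rw [hX3, hX2, hXdef]
    module
  have hII : ((1 + l) * (l * (l + 2)) * ((l * v + v - 1) * (l * v + v + 1))) • (E * G)
      = ((v - 1) + (2 * l + l ^ 2) * v) • (X * (X * X) - X)
        - ((1 + l) * ((v - 1) * (1 + 2 * l + l ^ 2)) * v) • (X * X - 1) := by
    rw [hX3, hX2, hXdef]
    module
  have hXA2 : X * X - 1 ∈ A := A.sub_mem (A.mul_mem hX hX) A.one_mem
  have hXA3 : X * (X * X) - X ∈ A := A.sub_mem (A.mul_mem hX (A.mul_mem hX hX)) hX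
  have hE : E ∈ A := unit_smul_mem hdet (by
    rw [hI]; exact A.sub_mem (A.smul_mem hXA2 _) (A.smul_mem hXA3 _))
  have hEGm : E * G ∈ A := unit_smul_mem hdet (by
    rw [hII]; exact A.sub_mem (A.smul_mem hXA3 _) (A.smul_mem hXA2 _))
  refine ⟨hE, ?_⟩
  have hGdef : G = X - l • (E * G) := by rw [hXdef, add_sub_cancel_right]
  rw [hGdef]
  exact A.sub_mem hX (A.smul_mem hEGm _)

/-- **Statement 15.** With `Q(λ,u) = 4(λ+2)²(λu+u−1)²(1+u)²(1+λ)²(λu+1+u)²λ²`, if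
`Q(λ_s, u_s)` is invertible in `k` for all `s ∈ S`, then `C_W(u)` is generated as a
unital `k`-algebra by the elements `g_s + λ_s g_s e_s`, `s ∈ S`. -/
theorem statement15 {B : Type} {M : CoxeterMatrix B} {W : Type} [Group W]
    (cs : CoxeterSystem M W) (k : Type) [CommRing k] (u : B → k)
    (hu : ∀ i j : B, IsConj (cs.simple i) (cs.simple j) → u i = u j)
    (lam : B → k)
    (hlamconj : ∀ i j : B, IsConj (cs.simple i) (cs.simple j) → lam i = lam j)
    (hQ : ∀ i : B, IsUnit
      (4 * (lam i + 2) ^ 2 * (lam i * u i + u i - 1) ^ 2 * (1 + u i) ^ 2 *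
        (1 + lam i) ^ 2 * (lam i * u i + 1 + u i) ^ 2 * lam i ^ 2)) :
    Algebra.adjoin k
      (Set.range fun i : B =>
        gCW cs k u i + lam i • (gCW cs k u i * eCW cs k u (simpleR cs i))) = ⊤ := by
  set A := Algebra.adjoin k
      (Set.range fun i : B =>
        gCW cs k u i + lam i • (gCW cs k u i * eCW cs k u (simpleR cs i))) with hA
  have hEG : ∀ i : B, eCW cs k u (simpleR cs i) ∈ A ∧ gCW cs k u i ∈ A := by
    intro i
    have hdet : IsUnit ((1 + lam i) * (lam i * (lam i + 2)) *
        ((lam i * u i + u i - 1) * (lam i * u i + u i + 1))) := by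
      have hq := hQ i
      rw [show (4 * (lam i + 2) ^ 2 * (lam i * u i + u i - 1) ^ 2 * (1 + u i) ^ 2 *
            (1 + lam i) ^ 2 * (lam i * u i + 1 + u i) ^ 2 * lam i ^ 2)
          = ((1 + lam i) * (lam i * (lam i + 2)) *
              ((lam i * u i + u i - 1) * (lam i * u i + u i + 1)))
            * (((1 + lam i) * (lam i * (lam i + 2)) *
              ((lam i * u i + u i - 1) * (lam i * u i + u i + 1)))
              * (4 * (1 + u i) ^ 2)) by ring] at hq
      exact isUnit_of_mul_isUnit_left hq
    exact aux_mem A (gCW cs k u i) (eCW cs k u (simpleR cs i)) (lam i) (u i)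
      (eCW_idem cs k u _) (gCW_eCW_simple_comm cs k u i) (gCW_sq cs k u i) hdet
      (Algebra.subset_adjoin ⟨i, rfl⟩)
  have econgr : ∀ (t₁ t₂ : Refl cs), t₁.1 = t₂.1 → eCW cs k u t₁ = eCW cs k u t₂ :=
    fun t₁ t₂ h => congrArg _ (Subtype.ext h)
  have hstep : ∀ (j : B) (t : Refl cs), eCW cs k u t ∈ A →
      eCW cs k u (conjR cs (cs.simple j) t) ∈ A := by
    intro j t ht
    rw [eCW_conjR_step]
    exact A.sub_mem (A.sub_mem (A.mul_mem (A.mul_mem (hEG j).2 ht) (hEG j).2)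
      (A.smul_mem (A.mul_mem (hEG j).1 ht) _))
      (A.smul_mem (A.mul_mem (A.mul_mem (hEG j).1 ht) (hEG j).2) _)
  have hkey : ∀ (l : List B) (i : B),
      eCW cs k u ⟨cs.wordProd l * cs.simple i * (cs.wordProd l)⁻¹,
        (cs.isReflection_simple i).conj (cs.wordProd l)⟩ ∈ A := by
    intro l
    induction l with
    | nil =>
      intro i
      rw [econgr _ (simpleR cs i) (by simp [simpleR])]
      exact (hEG i).1
    | cons j l ih =>
      intro i
      rw [econgr _ (conjR cs (cs.simple j)
          ⟨cs.wordProd l * cs.simple i * (cs.wordProd l)⁻¹,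
            (cs.isReflection_simple i).conj (cs.wordProd l)⟩)
        (by
          show cs.wordProd (j :: l) * cs.simple i * (cs.wordProd (j :: l))⁻¹
            = cs.simple j * (cs.wordProd l * cs.simple i * (cs.wordProd l)⁻¹)
              * (cs.simple j)⁻¹
          rw [cs.wordProd_cons]
          group)]
      exact hstep j _ (ih i)
  have hall : ∀ t : Refl cs, eCW cs k u t ∈ A := by
    intro t
    obtain ⟨w, i, hw⟩ := t.2
    obtain ⟨l, rfl⟩ := cs.wordProd_surjective w
    rw [econgr t ⟨cs.wordProd l * cs.simple i * (cs.wordProd l)⁻¹,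
      (cs.isReflection_simple i).conj (cs.wordProd l)⟩ hw]
    exact hkey l i
  rw [eq_top_iff]
  rintro z -
  obtain ⟨p, rfl⟩ := RingQuot.mkAlgHom_surjective k (CWrel cs k u) z
  induction p using FreeAlgebra.induction with
  | grade0 r =>
    rw [AlgHom.commutes]
    exact A.algebraMap_mem r
  | grade1 x =>
    cases x with
    | inl i => exact (hEG i).2
    | inr t => exact hall t
  | mul a b ha hb =>
    rw [map_mul]
    exact A.mul_mem ha hb
  | add a b ha hb =>
    rw [map_add]
    exact A.add_mem ha hb


end CWpaper
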